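/- If f : ℝ → ℝ is bounded continuous, then for every δ > 0, δ ‖(T_δ² f)'‖ ≤ 34 ‖f - T_δ f‖ in the sup norm, where T_δ² f = T_δ(T_δ f). -/

import Mathlib

/-- Forward Steklov operator `T_δ f(x) = (1/δ) ∫₀^δ f(x+t) dt`. -/
noncomputable def steklov (δ : ℝ) (f : ℝ → ℝ) : ℝ → ℝ :=
  fun x => (1 / δ) * ∫ t in (0:ℝ)..δ, f (x + t)

lemma steklov_eq_int {f : ℝ → ℝ} (hf : Continuous f) (δ : ℝ) (x : ℝ) :
    steklov δ f x = (1/δ) * ((∫ u in (0:ℝ)..(x+δ), f u) - ∫ u in (0:ℝ)..x, f u) := by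
  unfold steklov
  rw [intervalIntegral.integral_comp_add_left f x, add_zero,
    intervalIntegral.integral_interval_sub_left (hf.intervalIntegrable _ _)
      (hf.intervalIntegrable _ _)]

lemma hasDerivAt_steklov {f : ℝ → ℝ} (hf : Continuous f) (δ : ℝ) (x : ℝ) :
    HasDerivAt (steklov δ f) ((1/δ) * (f (x + δ) - f x)) x := by
  have h1 : HasDerivAt (fun y : ℝ => ∫ u in (0:ℝ)..(y+δ), f u) (f (x + δ)) x :=
    ((hf.integral_hasStrictDerivAt 0 (x+δ)).hasDerivAt).comp_add_const x δ
  have h2 : HasDerivAt (fun y : ℝ => ∫ u in (0:ℝ)..y, f u) (f x) x :=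
    (hf.integral_hasStrictDerivAt 0 x).hasDerivAt
  have h3 := ((h1.sub h2).const_mul (1/δ))
  have he : (fun y : ℝ => (1/δ) * ((∫ u in (0:ℝ)..(y+δ), f u) - ∫ u in (0:ℝ)..y, f u))
      = steklov δ f := by
    funext y; rw [steklov_eq_int hf]
  rw [← he]; exact h3

lemma continuous_steklov {f : ℝ → ℝ} (hf : Continuous f) (δ : ℝ) :
    Continuous (steklov δ f) := by
  have : Differentiable ℝ (steklov δ f) := fun x =>
    (hasDerivAt_steklov hf δ x).differentiableAt
  exact this.continuous

lemma deriv_steklov {f : ℝ → ℝ} (hf : Continuous f) (δ : ℝ) (x : ℝ) :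
    deriv (steklov δ f) x = (1/δ) * (f (x + δ) - f x) :=
  (hasDerivAt_steklov hf δ x).deriv

lemma abs_steklov_le {f : ℝ → ℝ} (hf : Continuous f) {δ M : ℝ} (hδ : 0 < δ)
    (hM : ∀ y, |f y| ≤ M) (x : ℝ) : |steklov δ f x| ≤ M := by
  have hM0 : 0 ≤ M := (abs_nonneg _).trans (hM 0)
  have h1 : ‖∫ t in (0:ℝ)..δ, f (x + t)‖ ≤ M * |δ - 0| :=
    intervalIntegral.norm_integral_le_of_norm_le_const (fun t _ => hM _)
  rw [steklov]
  rw [abs_mul, abs_of_pos (by positivity : (0:ℝ) < 1/δ)]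
  calc (1/δ) * |∫ t in (0:ℝ)..δ, f (x + t)| ≤ (1/δ) * (M * δ) := by
        apply mul_le_mul_of_nonneg_left _ (by positivity)
        simpa [abs_of_pos hδ] using h1
    _ = M := by field_simp

lemma steklov_sub {f g : ℝ → ℝ} (hf : Continuous f) (hg : Continuous g) (δ : ℝ) :
    steklov δ (fun y => f y - g y) = fun y => steklov δ f y - steklov δ g y := by
  funext x
  unfold steklov
  have i1 : IntervalIntegrable (fun t => f (x + t)) MeasureTheory.volume 0 δ :=
    (hf.comp (continuous_const.add continuous_id)).intervalIntegrable _ _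
  have i2 : IntervalIntegrable (fun t => g (x + t)) MeasureTheory.volume 0 δ :=
    (hg.comp (continuous_const.add continuous_id)).intervalIntegrable _ _
  rw [intervalIntegral.integral_sub i1 i2, mul_sub]

lemma steklov_increment {f : ℝ → ℝ} (hf : Continuous f) {δ B : ℝ}
    (hB : ∀ y, |(1/δ) * (f (y + δ) - f y)| ≤ B) {s : ℝ} (hs : 0 ≤ s) (y : ℝ) :
    |steklov δ f (y + s) - steklov δ f y| ≤ B * s := by
  have hc : Continuous fun r : ℝ => (1/δ) * (f (r + δ) - f r) :=
    continuous_const.mul ((hf.comp (continuous_id.add continuous_const)).sub hf)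
  have hFTC := intervalIntegral.integral_eq_sub_of_hasDerivAt
    (f := steklov δ f) (f' := fun r => (1/δ) * (f (r + δ) - f r))
    (fun r _ => hasDerivAt_steklov hf δ r) (hc.intervalIntegrable y (y+s))
  rw [← hFTC]
  rw [show (∫ r in y..y + s, (fun r => 1/δ * (f (r + δ) - f r)) r)
      = 1/δ * ∫ r in y..y + s, (f (r + δ) - f r) from
    intervalIntegral.integral_const_mul _ _]
  have h2 := intervalIntegral.norm_integral_le_of_norm_le_const (C := B)
    (f := fun r => (1/δ) * (f (r + δ) - f r)) (a := y) (b := y + s) (fun r _ => hB r)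
  calc |1 / δ * ∫ r in y..y + s, f (r + δ) - f r|
      = |1/δ| * |∫ r in y..y + s, f (r + δ) - f r| := by rw [abs_mul]
    _ ≤ B * s := by simpa [abs_mul, abs_inv, abs_of_nonneg hs] using h2

theorem sup_deriv_steklov_sq_le (f : ℝ → ℝ) (hf : Continuous f)
    (hb : BddAbove (Set.range fun x => |f x|)) (δ : ℝ) (hδ : 0 < δ) :
    δ * (⨆ x, |deriv (steklov δ (steklov δ f)) x|) ≤ 34 * ⨆ x, |f x - steklov δ f x| := by
  set Tf := steklov δ f with hTfdef
  have cTf : Continuous Tf := continuous_steklov hf δ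
  set g := steklov δ Tf with hgdef
  have cg : Continuous g := continuous_steklov cTf δ
  have hMf : ∀ y, |f y| ≤ ⨆ x, |f x| := fun y => le_ciSup hb y
  set Mf := ⨆ x, |f x| with hMfdef
  have hTfle : ∀ y, |Tf y| ≤ Mf := abs_steklov_le hf hδ hMf
  -- u = f - Tf and its sup M
  set u := fun y => f y - Tf y with hudef
  have cu : Continuous u := hf.sub cTf
  have hbu : BddAbove (Set.range fun x => |u x|) := ⟨2*Mf, by
    rintro _ ⟨y, rfl⟩
    calc |u y| ≤ |f y| + |Tf y| := abs_sub _ _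
      _ ≤ 2*Mf := by linarith [hMf y, hTfle y]⟩
  have hM : ∀ y, |u y| ≤ ⨆ x, |u x| := fun y => le_ciSup hbu y
  set M := ⨆ x, |u x| with hMdef
  have hM0 : 0 ≤ M := (abs_nonneg _).trans (hM 0)
  -- derivative of g and its sup S
  have hDg : ∀ y, deriv g y = (1/δ) * (Tf (y + δ) - Tf y) := deriv_steklov cTf δ
  have cDg : Continuous (deriv g) := by
    have : deriv g = fun y => (1/δ) * (Tf (y + δ) - Tf y) := funext hDg
    rw [this]
    exact continuous_const.mul ((cTf.comp (continuous_id.add continuous_const)).sub cTf)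
  have hbS : BddAbove (Set.range fun x => |deriv g x|) := ⟨(1/δ)*(2*Mf), by
    rintro _ ⟨y, rfl⟩
    show |deriv g y| ≤ (1/δ)*(2*Mf)
    rw [hDg y, abs_mul, abs_of_pos (by positivity : (0:ℝ) < 1/δ)]
    have h1 : |Tf (y+δ) - Tf y| ≤ 2*Mf := by
      calc |Tf (y+δ) - Tf y| ≤ |Tf (y+δ)| + |Tf y| := abs_sub _ _
        _ ≤ 2*Mf := by linarith [hTfle (y+δ), hTfle y]
    exact mul_le_mul_of_nonneg_left h1 (by positivity)⟩
  have hS : ∀ y, |deriv g y| ≤ ⨆ x, |deriv g x| := fun y => le_ciSup hbS y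
  set S := ⨆ x, |deriv g x| with hSdef
  have hS0 : 0 ≤ S := (abs_nonneg _).trans (hS 0)
  -- bound on the derivative of Tf
  set B := (2*M + δ*S)/δ with hBdef
  have hB0 : 0 ≤ B := by
    apply div_nonneg _ hδ.le
    nlinarith
  have hBTf : ∀ y, |(1/δ) * (f (y + δ) - f y)| ≤ B := by
    intro y
    have key : (1/δ) * (f (y + δ) - f y)
        = u (y+δ) * (1/δ) - u y * (1/δ) + deriv g y := by
      rw [hDg y]; simp only [hudef]; field_simp; ring
    rw [key]
    have t1 : |u (y+δ) * (1/δ) - u y * (1/δ) + deriv g y|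
        ≤ |u (y+δ)| * (1/δ) + |u y| * (1/δ) + |deriv g y| := by
      calc |u (y+δ) * (1/δ) - u y * (1/δ) + deriv g y|
          ≤ |u (y+δ) * (1/δ) - u y * (1/δ)| + |deriv g y| := abs_add_le _ _
        _ ≤ |u (y+δ) * (1/δ)| + |u y * (1/δ)| + |deriv g y| := by
            linarith [abs_sub (u (y+δ) * (1/δ)) (u y * (1/δ))]
        _ = |u (y+δ)| * (1/δ) + |u y| * (1/δ) + |deriv g y| := by
            rw [abs_mul, abs_mul, abs_of_pos (by positivity : (0:ℝ) < 1/δ)]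
    have t2 : |u (y+δ)| * (1/δ) + |u y| * (1/δ) + |deriv g y| ≤ B := by
      have hδ' : δ ≠ 0 := ne_of_gt hδ
      have e : B = M * (1/δ) + M * (1/δ) + S := by rw [hBdef]; field_simp; ring
      have h1δ : (0:ℝ) ≤ 1/δ := by positivity
      rw [e]
      exact add_le_add (add_le_add (mul_le_mul_of_nonneg_right (hM _) h1δ)
        (mul_le_mul_of_nonneg_right (hM _) h1δ)) (hS y)
    linarith
  -- Taylor remainder bound
  have hg' : ∀ y, HasDerivAt g (deriv g y) y := fun y => by
    rw [hDg]; exact hasDerivAt_steklov cTf δ y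
  have hDginc : ∀ x s, 0 ≤ s → |deriv g (x + s) - deriv g x| ≤ (2*B/δ) * s := by
    intro x s hs
    rw [hDg, hDg]
    have key : (1/δ) * (Tf (x + s + δ) - Tf (x+s)) - (1/δ) * (Tf (x + δ) - Tf x)
        = (1/δ) * ((Tf ((x+δ) + s) - Tf (x+δ)) - (Tf (x + s) - Tf x)) := by
      rw [show x + s + δ = (x + δ) + s by ring]; ring
    rw [key, abs_mul, abs_of_pos (by positivity : (0:ℝ) < 1/δ)]
    have h1 := steklov_increment hf hBTf hs (x+δ)
    have h2 := steklov_increment hf hBTf hs x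
    calc (1/δ) * |Tf (x+δ+s) - Tf (x+δ) - (Tf (x+s) - Tf x)|
        ≤ (1/δ) * (B*s + B*s) := by
          apply mul_le_mul_of_nonneg_left _ (by positivity)
          calc |Tf (x+δ+s) - Tf (x+δ) - (Tf (x+s) - Tf x)|
              ≤ |Tf (x+δ+s) - Tf (x+δ)| + |Tf (x+s) - Tf x| := abs_sub _ _
            _ ≤ B*s + B*s := add_le_add h1 h2
      _ = (2*B/δ) * s := by field_simp; ring
  have hR : ∀ x, ∀ t ∈ Set.Icc (0:ℝ) δ, |g (x+t) - g x - t * deriv g x| ≤ (B/δ) * t^2 := by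
    intro x t ht
    obtain ⟨ht0, htδ⟩ := ht
    have hFTC : (∫ s in (0:ℝ)..t, (deriv g (x+s) - deriv g x))
        = (g (x+t) - t * deriv g x) - (g (x+0) - 0 * deriv g x) := by
      apply intervalIntegral.integral_eq_sub_of_hasDerivAt
      · intro s _
        have hd2 : HasDerivAt (fun r : ℝ => r * deriv g x) (deriv g x) s := by
          simpa using (hasDerivAt_id s).mul_const (deriv g x)
        exact ((hg' (x+s)).comp_const_add x s).sub hd2
      · exact (((cDg.comp (continuous_const.add continuous_id)).sub
          continuous_const).intervalIntegrable _ _)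
    rw [add_zero, zero_mul, sub_zero] at hFTC
    have hbound : ‖∫ s in (0:ℝ)..t, (deriv g (x+s) - deriv g x)‖
        ≤ |∫ s in (0:ℝ)..t, (2*B/δ) * s| := by
      apply intervalIntegral.norm_integral_le_abs_of_norm_le
      · filter_upwards [MeasureTheory.ae_restrict_mem measurableSet_uIoc] with s hs
        rw [Set.uIoc_of_le ht0] at hs
        simpa [Real.norm_eq_abs] using hDginc x s hs.1.le
      · exact (continuous_const.mul continuous_id).intervalIntegrable _ _
    rw [Real.norm_eq_abs] at hbound
    have hint : (∫ s in (0:ℝ)..t, (2*B/δ) * s) = (B/δ) * t^2 := by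
      rw [intervalIntegral.integral_const_mul, integral_id]
      ring
    rw [hFTC, hint] at hbound
    have habs : |(B/δ) * t^2| = (B/δ)*t^2 :=
      abs_of_nonneg (mul_nonneg (div_nonneg hB0 hδ.le) (sq_nonneg t))
    rw [habs] at hbound
    calc |g (x+t) - g x - t * deriv g x|
        = |g (x+t) - t * deriv g x - g x| := by ring_nf
      _ ≤ (B/δ)*t^2 := hbound
  -- key Taylor identity
  have hδ' : δ ≠ 0 := ne_of_gt hδ
  have hkey : ∀ x, g x - steklov δ g x + (δ/2) * deriv g x
      = -(1/δ) * ∫ t in (0:ℝ)..δ, (g (x+t) - g x - t * deriv g x) := by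
    intro x
    have i1 : IntervalIntegrable (fun t => g (x+t)) MeasureTheory.volume 0 δ :=
      (cg.comp (continuous_const.add continuous_id)).intervalIntegrable _ _
    have i2 : IntervalIntegrable (fun _ : ℝ => g x) MeasureTheory.volume 0 δ :=
      intervalIntegrable_const
    have i3 : IntervalIntegrable (fun t : ℝ => t * deriv g x) MeasureTheory.volume 0 δ :=
      (continuous_id.mul continuous_const).intervalIntegrable _ _
    have e1 : (∫ t in (0:ℝ)..δ, (g (x+t) - g x - t * deriv g x))
        = (∫ t in (0:ℝ)..δ, g (x+t)) - δ * g x - (δ^2/2) * deriv g x := by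
      rw [intervalIntegral.integral_sub (i1.sub i2) i3,
        intervalIntegral.integral_sub i1 i2, intervalIntegral.integral_const,
        intervalIntegral.integral_mul_const, integral_id]
      simp
    rw [e1]
    show g x - (1/δ) * (∫ t in (0:ℝ)..δ, g (x+t)) + (δ/2) * deriv g x = _
    field_simp
    ring
  -- bound the integral of the remainder
  have hIR : ∀ x, |∫ t in (0:ℝ)..δ, (g (x+t) - g x - t * deriv g x)| ≤ (B/δ) * (δ^3/3) := by
    intro x
    have hbound : ‖∫ t in (0:ℝ)..δ, (g (x+t) - g x - t * deriv g x)‖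
        ≤ |∫ t in (0:ℝ)..δ, (B/δ) * t^2| := by
      apply intervalIntegral.norm_integral_le_abs_of_norm_le
      · filter_upwards [MeasureTheory.ae_restrict_mem measurableSet_uIoc] with s hs
        rw [Set.uIoc_of_le hδ.le] at hs
        simpa [Real.norm_eq_abs] using hR x s ⟨hs.1.le, hs.2⟩
      · exact (continuous_const.mul (continuous_pow 2)).intervalIntegrable _ _
    have hint : (∫ t in (0:ℝ)..δ, (B/δ) * t^2) = (B/δ) * (δ^3/3) := by
      rw [intervalIntegral.integral_const_mul, integral_pow]
      norm_num
    rw [Real.norm_eq_abs, hint] at hbound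
    calc |∫ t in (0:ℝ)..δ, (g (x+t) - g x - t * deriv g x)| ≤ |(B/δ) * (δ^3/3)| := hbound
      _ = (B/δ) * (δ^3/3) := abs_of_nonneg (by positivity)
  -- contractivity: |g - Tg| ≤ M
  have hgTg : ∀ x, |g x - steklov δ g x| ≤ M := by
    have e1 : steklov δ u = fun y => Tf y - g y := steklov_sub hf cTf δ
    have cu1 : Continuous (steklov δ u) := continuous_steklov cu δ
    have e2 : steklov δ (steklov δ u) = fun y => g y - steklov δ g y := by
      rw [e1]; exact steklov_sub cTf cg δ
    intro x
    have h1 : ∀ y, |steklov δ u y| ≤ M := abs_steklov_le cu hδ hM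
    have h2 : |steklov δ (steklov δ u) x| ≤ M := abs_steklov_le cu1 hδ h1 x
    rw [e2] at h2
    exact h2
  -- combine
  have hfin : ∀ x, |deriv g x| ≤ (M + (2*M + δ*S)/3) * (2/δ) := by
    intro x
    have hIeq : (1/δ) * ((B/δ) * (δ^3/3)) = (2*M + δ*S)/3 := by
      rw [hBdef]; field_simp
    have h4 : (δ/2) * |deriv g x| ≤ M + (2*M + δ*S)/3 := by
      have ha : |g x - steklov δ g x + (δ/2) * deriv g x| ≤ (2*M + δ*S)/3 := by
        rw [hkey x, abs_mul, abs_neg, abs_of_pos (by positivity : (0:ℝ) < 1/δ), ← hIeq]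
        exact mul_le_mul_of_nonneg_left (hIR x) (by positivity)
      have hb' := hgTg x
      have : (δ/2) * |deriv g x| = |(δ/2) * deriv g x| := by
        rw [abs_mul, abs_of_pos (by positivity : (0:ℝ) < δ/2)]
      rw [this]
      calc |(δ/2) * deriv g x|
          = |(g x - steklov δ g x + (δ/2) * deriv g x) - (g x - steklov δ g x)| := by
            ring_nf
        _ ≤ |g x - steklov δ g x + (δ/2) * deriv g x| + |g x - steklov δ g x| := abs_sub _ _
        _ ≤ (2*M + δ*S)/3 + M := add_le_add ha hb'
        _ = M + (2*M + δ*S)/3 := by ring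
    calc |deriv g x| = ((δ/2) * |deriv g x|) * (2/δ) := by field_simp
      _ ≤ (M + (2*M + δ*S)/3) * (2/δ) :=
          mul_le_mul_of_nonneg_right h4 (by positivity)
  have hfinS : S ≤ (M + (2*M + δ*S)/3) * (2/δ) := by
    rw [hSdef]; exact ciSup_le hfin
  have h10 : δ * S ≤ 10 * M := by
    have h2 := mul_le_mul_of_nonneg_left hfinS hδ.le
    have h3 : δ * ((M + (2*M + δ*S)/3) * (2/δ)) = 2*M + (4*M + 2*(δ*S))/3 := by
      field_simp; ring
    rw [h3] at h2
    linarith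
  have hMg : (⨆ x, |f x - Tf x|) = M := rfl
  calc δ * S ≤ 10 * M := h10
    _ ≤ 34 * M := by linarith
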